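/- (Quantitative core of Proposition 6.1: uniform closeness of Lipschitz maps agreeing off a small set.) Let n ≥ 2 be an integer and let l, K > 0. There exist constants C > 0 and h₀ > 0, depending only on n, l and K, with the following property: for every L > 0, every h with 0 < h ≤ min(h₀, L), every metric space (Y, d), and every pair of maps f, g : Ω_h → Y which are each Lipschitz with constant l and satisfy 𝓛ⁿ({x ∈ Ω_h : f(x) ≠ g(x)}) ≤ K h^{n+3}, one has sup_{x ∈ Ω_h} d(f(x), g(x)) ≤ C h^{1+3/n}. -/

import Mathlib

open MeasureTheory Set

noncomputable section

/-- The thin tube `Ω_h = (−L,L) × B_h(0) ⊂ ℝ × ℝ^m` (so the ambient dimension is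
`n = m + 1`). -/
def Tube (m : ℕ) (L h : ℝ) : Set (ℝ × EuclideanSpace ℝ (Fin m)) :=
  Ioo (-L) L ×ˢ Metric.ball (0 : EuclideanSpace ℝ (Fin m)) h

/-- The Euclidean distance on `ℝ × ℝ^m = ℝ^{m+1}`. -/
def prodDist {m : ℕ} (x y : ℝ × EuclideanSpace ℝ (Fin m)) : ℝ :=
  Real.sqrt ((x.1 - y.1) ^ 2 + ‖x.2 - y.2‖ ^ 2)

/-- (Quantitative core of Proposition 6.1: uniform closeness of
Lipschitz maps agreeing off a small set.)  Here the ambient dimension is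
`n = m + 1 ≥ 2`; the constants `C`, `h₀` depend only on `n`, `l` and `K`. -/
lemma prodDist_le {m : ℕ} (x y : ℝ × EuclideanSpace ℝ (Fin m)) (r : ℝ)
    (h1 : |x.1 - y.1| ≤ r) (h2 : ‖x.2 - y.2‖ ≤ r) :
    prodDist x y ≤ Real.sqrt 2 * r := by
  have hr : 0 ≤ r := le_trans (abs_nonneg _) h1
  obtain ⟨ha, hb⟩ := abs_le.mp h1
  have e1 : (x.1 - y.1) ^ 2 ≤ r ^ 2 := sq_le_sq' ha hb
  have e2 : ‖x.2 - y.2‖ ^ 2 ≤ r ^ 2 := pow_le_pow_left₀ (norm_nonneg _) h2 2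
  have : (x.1 - y.1) ^ 2 + ‖x.2 - y.2‖ ^ 2 ≤ 2 * r ^ 2 := by linarith
  calc prodDist x y ≤ Real.sqrt (2 * r ^ 2) := Real.sqrt_le_sqrt this
    _ = Real.sqrt 2 * r := by
        rw [Real.sqrt_mul (by norm_num), Real.sqrt_sq hr]

theorem lipschitz_maps_uniformly_close (m : ℕ) (hm : 1 ≤ m) (l K : ℝ)
    (hl : 0 < l) (hK : 0 < K) :
    ∃ C : ℝ, 0 < C ∧ ∃ h₀ : ℝ, 0 < h₀ ∧
      ∀ (L h : ℝ), 0 < L → 0 < h → h ≤ min h₀ L →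
        ∀ (Y : Type) [MetricSpace Y], ∀ f g : ℝ × EuclideanSpace ℝ (Fin m) → Y,
          (∀ x ∈ Tube m L h, ∀ y ∈ Tube m L h, dist (f x) (f y) ≤ l * prodDist x y) →
          (∀ x ∈ Tube m L h, ∀ y ∈ Tube m L h, dist (g x) (g y) ≤ l * prodDist x y) →
          volume {x ∈ Tube m L h | f x ≠ g x} ≤ ENNReal.ofReal (K * h ^ (m + 1 + 3)) →
          ∀ x ∈ Tube m L h,
            dist (f x) (g x) ≤ C * h ^ ((1 : ℝ) + 3 / ((m : ℝ) + 1)) := by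
  haveI : Nontrivial (EuclideanSpace ℝ (Fin m)) :=
    Module.nontrivial_of_finrank_pos (R := ℝ) (by simp [finrank_euclideanSpace_fin]; omega)
  set ω : ENNReal := volume (Metric.ball (0 : EuclideanSpace ℝ (Fin m)) 1) with hωdef
  have hω_pos : 0 < ω := Metric.measure_ball_pos _ _ one_pos
  have hω_fin : ω < ⊤ := measure_ball_lt_top
  set cR : ℝ := ω.toReal / 2 ^ m with hcRdef
  have hωt_pos : 0 < ω.toReal := ENNReal.toReal_pos hω_pos.ne' hω_fin.ne
  have hcR_pos : 0 < cR := div_pos hωt_pos (by positivity)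
  set A : ℝ := (2 * K / cR) ^ ((1 : ℝ) / ((m : ℝ) + 1)) with hAdef
  have hA_pos : 0 < A := Real.rpow_pos_of_pos (by positivity) _
  have hm1 : (0:ℝ) < (m : ℝ) + 1 := by positivity
  have hApow : A ^ (m + 1) = 2 * K / cR := by
    rw [← Real.rpow_natCast A (m + 1), hAdef, ← Real.rpow_mul (by positivity)]
    push_cast
    rw [one_div_mul_cancel hm1.ne', Real.rpow_one]
  refine ⟨2 * Real.sqrt 2 * l * A, by positivity,
    (1 / A) ^ (((m : ℝ) + 1) / 3), Real.rpow_pos_of_pos (by positivity) _, ?_⟩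
  intro L h hL hh hmin Y _ f g hf hg hvol x hx
  set e : ℝ := ((m : ℝ) + 4) / ((m : ℝ) + 1) with hedef
  have he_eq : e = (1 : ℝ) + 3 / ((m : ℝ) + 1) := by
    rw [hedef]; field_simp; ring
  set r : ℝ := A * h ^ e with hrdef
  have hhe_pos : 0 < h ^ e := Real.rpow_pos_of_pos hh e
  have hr_pos : 0 < r := by positivity
  -- r ≤ h
  have hrh : r ≤ h := by
    have hhh0 : h ≤ (1 / A) ^ (((m : ℝ) + 1) / 3) := le_trans hmin (min_le_left _ _)
    have h1 : h ^ ((3:ℝ) / ((m : ℝ) + 1))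
        ≤ ((1 / A) ^ (((m : ℝ) + 1) / 3)) ^ ((3:ℝ) / ((m : ℝ) + 1)) :=
      Real.rpow_le_rpow hh.le hhh0 (by positivity)
    have h2 : ((1 / A : ℝ) ^ (((m : ℝ) + 1) / 3)) ^ ((3:ℝ) / ((m : ℝ) + 1)) = 1 / A := by
      rw [← Real.rpow_mul (by positivity)]
      rw [div_mul_div_comm]
      rw [show ((m : ℝ) + 1) * 3 / (3 * ((m : ℝ) + 1)) = 1 by field_simp]
      exact Real.rpow_one _
    have h3 : A * h ^ ((3:ℝ) / ((m : ℝ) + 1)) ≤ 1 := by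
      calc A * h ^ ((3:ℝ) / ((m : ℝ) + 1)) ≤ A * (1 / A) :=
            mul_le_mul_of_nonneg_left (h1.trans_eq h2) hA_pos.le
        _ = 1 := by field_simp
    have hsplit : h ^ e = h * h ^ ((3:ℝ) / ((m : ℝ) + 1)) := by
      rw [he_eq, Real.rpow_add hh, Real.rpow_one]
    calc r = h * (A * h ^ ((3:ℝ) / ((m : ℝ) + 1))) := by rw [hrdef, hsplit]; ring
      _ ≤ h * 1 := mul_le_mul_of_nonneg_left h3 hh.le
      _ = h := mul_one h
  have hrL : r ≤ L := hrh.trans (le_trans hmin (min_le_right _ _))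
  have hxt : x.1 ∈ Ioo (-L) L := hx.1
  have hxv : ‖x.2‖ < h := by
    have := hx.2; rwa [mem_ball_zero_iff] at this
  -- the interval
  set a : ℝ := if -L + r ≤ x.1 then x.1 - r else x.1 with hadef
  have hI_sub : Ioo a (a + r) ⊆ Ioo (-L) L := by
    intro s hs
    rcases le_or_gt (-L + r) x.1 with hc | hc
    · rw [hadef, if_pos hc] at hs
      exact ⟨by linarith [hs.1], lt_of_lt_of_le hs.2 (by linarith [hxt.2])⟩
    · rw [hadef, if_neg (not_le.mpr hc)] at hs
      exact ⟨lt_trans hxt.1 hs.1, by linarith [hs.2, hxt.1]⟩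
  have hI_close : ∀ s ∈ Ioo a (a + r), |s - x.1| ≤ r := by
    intro s hs
    rcases le_or_gt (-L + r) x.1 with hc | hc
    · rw [hadef, if_pos hc] at hs
      rw [abs_le]; constructor <;> [linarith [hs.1]; linarith [hs.2]]
    · rw [hadef, if_neg (not_le.mpr hc)] at hs
      rw [abs_le]; constructor <;> [linarith [hs.1]; linarith [hs.2]]
  -- the ball
  have hfac_pos : 0 < 1 - r / (2 * h) := by
    have : r / (2 * h) < 1 := by
      rw [div_lt_one (by positivity)]; linarith
    linarith
  set w : EuclideanSpace ℝ (Fin m) := (1 - r / (2 * h)) • x.2 with hwdef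
  have hnormw : ‖w‖ = (1 - r / (2 * h)) * ‖x.2‖ := by
    rw [hwdef, norm_smul, Real.norm_eq_abs, abs_of_nonneg hfac_pos.le]
  have hwv : ‖w - x.2‖ ≤ r / 2 := by
    have : w - x.2 = (-(r / (2 * h))) • x.2 := by
      rw [hwdef]
      nth_rewrite 2 [← one_smul ℝ x.2]
      rw [← sub_smul]
      congr 1
      ring
    rw [this, norm_smul, Real.norm_eq_abs, abs_neg,
      abs_of_nonneg (by positivity)]
    calc r / (2 * h) * ‖x.2‖ ≤ r / (2 * h) * h :=
          mul_le_mul_of_nonneg_left hxv.le (by positivity)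
      _ = r / 2 := by field_simp
  have hB_sub : Metric.ball w (r / 2) ⊆ Metric.ball (0 : EuclideanSpace ℝ (Fin m)) h := by
    intro z hz
    rw [mem_ball_zero_iff]
    rw [Metric.mem_ball, dist_eq_norm] at hz
    have tri : ‖z‖ ≤ ‖z - w‖ + ‖w‖ := by
      have := dist_triangle z w 0
      simp only [dist_eq_norm, sub_zero] at this; exact this
    calc ‖z‖ ≤ ‖z - w‖ + ‖w‖ := tri
      _ < r / 2 + (1 - r / (2 * h)) * h := by
          apply add_lt_add_of_lt_of_le hz
          rw [hnormw]
          exact mul_le_mul_of_nonneg_left hxv.le hfac_pos.le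
      _ = h := by field_simp; ring
  have hB_close : ∀ z ∈ Metric.ball w (r / 2), ‖z - x.2‖ ≤ r := by
    intro z hz
    rw [Metric.mem_ball, dist_eq_norm] at hz
    have tri : ‖z - x.2‖ ≤ ‖z - w‖ + ‖w - x.2‖ := by
      have := dist_triangle z w x.2
      rwa [dist_eq_norm, dist_eq_norm, dist_eq_norm] at this
    calc ‖z - x.2‖ ≤ ‖z - w‖ + ‖w - x.2‖ := tri
      _ ≤ r / 2 + r / 2 := add_le_add hz.le hwv
      _ = r := by ring
  -- the small set S
  set S : Set (ℝ × EuclideanSpace ℝ (Fin m)) := Ioo a (a + r) ×ˢ Metric.ball w (r / 2)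
    with hSdef
  have hS_tube : S ⊆ Tube m L h := prod_mono hI_sub hB_sub
  have hS_vol : volume S = ENNReal.ofReal (r ^ (m + 1) * cR) := by
    rw [hSdef, Measure.volume_eq_prod, Measure.prod_prod, Real.volume_Ioo,
      show a + r - a = r by ring,
      Measure.addHaar_ball _ _ (by positivity : (0:ℝ) ≤ r / 2), ← hωdef,
      ← ENNReal.ofReal_toReal hω_fin.ne, ← ENNReal.ofReal_mul (by positivity),
      ← ENNReal.ofReal_mul (by positivity), finrank_euclideanSpace_fin]
    congr 1
    rw [hcRdef, div_pow]
    field_simp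
    ring
  have hrval : r ^ (m + 1) * cR = 2 * (K * h ^ (m + 1 + 3)) := by
    have h1 : (h ^ e) ^ (m + 1) = h ^ (m + 1 + 3) := by
      rw [← Real.rpow_natCast (h ^ e), ← Real.rpow_mul hh.le,
        show e * ((m + 1 : ℕ) : ℝ) = ((m + 1 + 3 : ℕ) : ℝ) by
          push_cast [hedef]; field_simp; ring,
        Real.rpow_natCast]
    rw [hrdef, mul_pow, h1, hApow]
    field_simp
  -- existence of a coincidence point in S
  have hkey : ENNReal.ofReal (K * h ^ (m + 1 + 3)) < volume S := by
    rw [hS_vol, hrval]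
    apply ENNReal.ofReal_lt_ofReal_iff_of_nonneg (by positivity) |>.mpr
    nlinarith [pow_pos hh (m + 1 + 3)]
  have hexist : ∃ y ∈ S, f y = g y := by
    by_contra hcon
    push_neg at hcon
    have hsub : S ⊆ {x | x ∈ Tube m L h ∧ f x ≠ g x} :=
      fun y hy => ⟨hS_tube hy, hcon y hy⟩
    exact absurd (le_trans (measure_mono hsub) hvol) (not_le.mpr hkey)
  obtain ⟨y, hyS, hfy⟩ := hexist
  have hyT : y ∈ Tube m L h := hS_tube hyS
  have hy1 : |y.1 - x.1| ≤ r := hI_close y.1 hyS.1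
  have hy2 : ‖y.2 - x.2‖ ≤ r := hB_close y.2 hyS.2
  have hpd1 : prodDist x y ≤ Real.sqrt 2 * r :=
    prodDist_le x y r (by rwa [abs_sub_comm]) (by rwa [norm_sub_rev])
  have hpd2 : prodDist y x ≤ Real.sqrt 2 * r := prodDist_le y x r hy1 hy2
  have hs2 : (0:ℝ) < Real.sqrt 2 := by positivity
  calc dist (f x) (g x) ≤ dist (f x) (f y) + dist (f y) (g x) := dist_triangle _ _ _
    _ = dist (f x) (f y) + dist (g y) (g x) := by rw [hfy]
    _ ≤ l * prodDist x y + l * prodDist y x := add_le_add (hf x hx y hyT) (hg y hyT x hx)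
    _ ≤ l * (Real.sqrt 2 * r) + l * (Real.sqrt 2 * r) :=
        add_le_add (mul_le_mul_of_nonneg_left hpd1 hl.le)
          (mul_le_mul_of_nonneg_left hpd2 hl.le)
    _ = 2 * Real.sqrt 2 * l * A * h ^ ((1 : ℝ) + 3 / ((m : ℝ) + 1)) := by
        rw [hrdef, he_eq]; ring
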